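/- With U, F, G as defined, U takes 1, F, F^2, F^3 to 1, G, G^2, G^3 + F respectively. -/
import Mathlib


open Polynomial

noncomputable def Fp : Polynomial (ZMod 2) := X * (X + 1) ^ 3

noncomputable def Gp : Polynomial (ZMod 2) := X ^ 3 * (X + 1)

lemma two_eq_zero : (2 : Polynomial (ZMod 2)) = 0 := by
  rw [show (2 : Polynomial (ZMod 2)) = 1 + 1 from by norm_num, ← C_1, ← C_add]
  rw [show (1 + 1 : ZMod 2) = 0 from rfl, map_zero]

theorem stmt10 (U : Polynomial (ZMod 2) →ₗ[ZMod 2] Polynomial (ZMod 2))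
    (hsemi : ∀ f, U (Gp * f) = Fp * U f)
    (h0 : U 1 = 1) (h1 : U X = X) (h2 : U (X ^ 2) = X ^ 2)
    (h3 : U (X ^ 3) = X ^ 3 + X ^ 2 + X) :
    U 1 = 1 ∧ U Fp = Gp ∧ U (Fp ^ 2) = Gp ^ 2 ∧ U (Fp ^ 3) = Gp ^ 3 + Fp := by
  have t2 := two_eq_zero
  have step : ∀ n : ℕ, U (X ^ (n + 4)) = Fp * U (X ^ n) + U (X ^ (n + 3)) := by
    intro n
    have e : (X : Polynomial (ZMod 2)) ^ (n + 4) = Gp * X ^ n + X ^ (n + 3) := by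
      unfold Gp
      linear_combination (-(X : Polynomial (ZMod 2)) ^ (n + 3)) * t2
    rw [e, map_add, hsemi]
  have h4 : U (X ^ 4) = X ^ 4 := by
    have e := step 0; norm_num at e
    rw [e, h0, h3]; unfold Fp
    linear_combination (2*(X:Polynomial (ZMod 2))^3 + 2*X^2 + X) * t2
  have h5 : U (X ^ 5) = X ^ 5 + X ^ 3 + X ^ 2 := by
    have e := step 1; norm_num at e
    rw [e, h1, h4]; unfold Fp
    linear_combination (2*(X:Polynomial (ZMod 2))^4 + X^3) * t2
  have h6 : U (X ^ 6) = X ^ 6 + X ^ 4 + X ^ 2 := by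
    have e := step 2; norm_num at e
    rw [e, h2, h5]; unfold Fp
    linear_combination (2*(X:Polynomial (ZMod 2))^5 + X^4 + X^3) * t2
  have h7 : U (X ^ 7) = X ^ 7 + X ^ 6 + X ^ 5 := by
    have e := step 3; norm_num at e
    rw [e, h3, h6]; unfold Fp
    linear_combination (2*(X:Polynomial (ZMod 2))^6 + 3*X^5 + 4*X^4 + 2*X^3 + X^2) * t2
  have h8 : U (X ^ 8) = X ^ 8 := by
    have e := step 4; norm_num at e
    rw [e, h4, h7]; unfold Fp
    linear_combination (2*(X:Polynomial (ZMod 2))^7 + 2*X^6 + X^5) * t2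
  have h9 : U (X ^ 9) = X ^ 9 + X ^ 6 + X ^ 3 := by
    have e := step 5; norm_num at e
    rw [e, h5, h8]; unfold Fp
    linear_combination (2*(X:Polynomial (ZMod 2))^8 + 2*X^7 + 2*X^6 + 3*X^5 + 2*X^4) * t2
  have h10 : U (X ^ 10) = X ^ 10 + X ^ 6 + X ^ 4 := by
    have e := step 6; norm_num at e
    rw [e, h6, h9]; unfold Fp
    linear_combination (2*(X:Polynomial (ZMod 2))^9 + 2*X^8 + 2*X^7 + 2*X^6 + 2*X^5 + X^4 + X^3) * t2
  have h11 : U (X ^ 11) = X ^ 11 + X ^ 10 + X ^ 9 + X ^ 8 + X ^ 4 := by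
    have e := step 7; norm_num at e
    rw [e, h7, h10]; unfold Fp
    linear_combination (2*(X:Polynomial (ZMod 2))^10 + 3*X^9 + 3*X^8 + 2*X^7 + X^6) * t2
  have h12 : U (X ^ 12) = X ^ 12 + X ^ 8 + X ^ 4 := by
    have e := step 8; norm_num at e
    rw [e, h8, h11]; unfold Fp
    linear_combination (2*(X:Polynomial (ZMod 2))^11 + 2*X^10 + X^9) * t2
  refine ⟨h0, ?_, ?_, ?_⟩
  · have eF : Fp = X ^ 4 + X ^ 3 + X ^ 2 + X := by
      unfold Fp
      linear_combination ((X:Polynomial (ZMod 2))^3 + X^2) * t2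
    rw [eF, map_add, map_add, map_add, h4, h3, h2, h1]
    unfold Gp
    linear_combination ((X:Polynomial (ZMod 2))^2 + X) * t2
  · have eF : Fp ^ 2 = X ^ 8 + X ^ 6 + X ^ 4 + X ^ 2 := by
      unfold Fp
      linear_combination (3*(X:Polynomial (ZMod 2))^7 + 7*X^6 + 10*X^5 + 7*X^4 + 3*X^3) * t2
    rw [eF, map_add, map_add, map_add, h8, h6, h4, h2]
    unfold Gp
    linear_combination (-(X:Polynomial (ZMod 2))^7 + X^4 + X^2) * t2
  · have eF : Fp ^ 3 = X ^ 12 + X ^ 11 + X ^ 4 + X ^ 3 := by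
      unfold Fp
      linear_combination (4*(X:Polynomial (ZMod 2))^11 + 18*X^10 + 42*X^9 + 63*X^8 + 63*X^7 + 42*X^6 + 18*X^5 + 4*X^4) * t2
    rw [eF, map_add, map_add, map_add, h12, h11, h4, h3]
    unfold Gp Fp
    linear_combination (-(X:Polynomial (ZMod 2))^11 - X^10 + X^8 + X^4 - X^3 - X^2) * t2
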